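/- Let W be a cyclic word of length n ≥ 3 over a three-letter alphabet {a,b,c} such that (i) no two cyclically adjacent letters are equal, (ii) W contains no cyclic factor of length 4 of the form x y z y with x, y, z pairwise distinct, and (iii) all three letters occur in W. Then n is divisible by 3 and W is, up to cyclic rotation, equal to (abc)^{n/3} or to (acb)^{n/3}. -/

import Mathlib

open Fin.NatCast in
/-- Let `W` be a cyclic word of length `n ≥ 3` over the three-letter alphabet `Fin 3`
(`a = 0`, `b = 1`, `c = 2`) such that (i) no two cyclically adjacent letters are equal,
(ii) `W` contains no cyclic factor of length 4 of the form `x y z y` with `x, y, z`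
pairwise distinct, and (iii) all three letters occur in `W`.  Then `3 ∣ n` and `W` is,
up to cyclic rotation, equal to `(abc)^{n/3}` or to `(acb)^{n/3}` (the letter at offset
`k` from the rotation point being `k mod 3`, resp. `2k mod 3`). -/
theorem stmt_3 (n : ℕ) (hn : 3 ≤ n) (W : ZMod n → Fin 3)
    (h1 : ∀ i : ZMod n, W (i + 1) ≠ W i)
    (h2 : ∀ i : ZMod n, ¬(W i ≠ W (i + 1) ∧ W (i + 1) ≠ W (i + 2) ∧ W i ≠ W (i + 2) ∧
        W (i + 3) = W (i + 1)))
    (h3 : ∀ l : Fin 3, ∃ i : ZMod n, W i = l) :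
    3 ∣ n ∧ ∃ t : ZMod n,
      (∀ k : ℕ, W (t + (k : ZMod n)) = (k : Fin 3)) ∨
      (∀ k : ℕ, W (t + (k : ZMod n)) = ((2 * k : ℕ) : Fin 3)) := by
  haveI : NeZero n := ⟨by omega⟩
  have fin3 : ∀ a b c d : Fin 3, a ≠ b ∧ b ≠ c ∧ a ≠ c ∧ d ≠ b ∧ d ≠ c → d = a := by decide
  have fin3' : ∀ a b : Fin 3, a ≠ b → ∃ c : Fin 3, c ≠ a ∧ c ≠ b := by decide
  have hx1 : ∀ x : Fin 3, x ≠ 0 → x = 1 ∨ x = 2 := by decide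
  have hx2 : ∀ x : Fin 3, x ≠ 0 → x ≠ 1 → x = 2 := by decide
  have hx3 : ∀ x : Fin 3, x ≠ 0 → x ≠ 2 → x = 1 := by decide
  set D : ZMod n → Prop :=
    fun i => W i ≠ W (i + 1) ∧ W (i + 1) ≠ W (i + 2) ∧ W i ≠ W (i + 2) with hDdef
  have step : ∀ i, D i → W (i + 3) = W i ∧ D (i + 1) := by
    intro i hd
    obtain ⟨d1, d2, d3⟩ := hd
    have h4 : W (i + 3) ≠ W (i + 1) := fun h => h2 i ⟨d1, d2, d3, h⟩
    have h5 : W (i + 3) ≠ W (i + 2) := by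
      have e : i + 2 + 1 = i + 3 := by ring
      have := h1 (i + 2); rwa [e] at this
    have hW : W (i + 3) = W i := fin3 _ _ _ _ ⟨d1, d2, d3, h4, h5⟩
    have e1 : i + 1 + 1 = i + 2 := by ring
    have e2 : i + 1 + 2 = i + 3 := by ring
    refine ⟨hW, ?_, ?_, ?_⟩
    · rwa [e1]
    · rw [e1, e2, hW]; exact fun h => d3 h.symm
    · rw [e2, hW]; exact fun h => d1 h.symm
  have hex : ∃ j, D j := by
    by_contra hc
    push_neg at hc
    have per2 : ∀ i, W (i + 2) = W i := by
      intro i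
      by_contra hne
      refine hc i ⟨(h1 i).symm, ?_, fun h => hne h.symm⟩
      have e : i + 1 + 1 = i + 2 := by ring
      have := h1 (i + 1); rw [e] at this; exact this.symm
    have key2 : ∀ k : ℕ, W ((k : ℕ) : ZMod n) = W ((k % 2 : ℕ) : ZMod n) := by
      intro k
      induction k using Nat.strong_induction_on with
      | _ k ih =>
        rcases lt_or_ge k 2 with h | h
        · rw [Nat.mod_eq_of_lt h]
        · obtain ⟨m, rfl⟩ : ∃ m, k = m + 2 := ⟨k - 2, by omega⟩
          have e : ((m + 2 : ℕ) : ZMod n) = ((m : ℕ) : ZMod n) + 2 := by push_cast; ring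
          rw [e, per2, Nat.add_mod_right]
          exact ih m (by omega)
    have hW01 : W 1 ≠ W 0 := by have := h1 0; rwa [zero_add] at this
    obtain ⟨l, hl0, hl1⟩ := fin3' (W 0) (W 1) hW01.symm
    obtain ⟨i, hi⟩ := h3 l
    obtain ⟨k, rfl⟩ := ZMod.natCast_rightInverse.surjective i
    have hk := key2 k
    rcases Nat.mod_two_eq_zero_or_one k with h | h <;> rw [h] at hk
    · apply hl0; rw [← hi, hk, Nat.cast_zero]
    · apply hl1; rw [← hi, hk, Nat.cast_one]
  obtain ⟨j, hj⟩ := hex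
  have Dall : ∀ k : ℕ, D (j + (k : ZMod n)) := by
    intro k
    induction k with
    | zero => simpa using hj
    | succ m ih =>
      have hs := (step _ ih).2
      have e : j + (m : ZMod n) + 1 = j + ((m + 1 : ℕ) : ZMod n) := by push_cast; ring
      rwa [e] at hs
  have Dz : ∀ i, D i := by
    intro i
    obtain ⟨k, hk⟩ := ZMod.natCast_rightInverse.surjective (i - j)
    have e : i = j + (k : ZMod n) := by rw [hk]; ring
    rw [e]; exact Dall k
  have per3 : ∀ i : ZMod n, W (i + 3) = W i := fun i => (step i (Dz i)).1
  have key3 : ∀ (i : ZMod n) (k : ℕ),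
      W (i + (k : ZMod n)) = W (i + ((k % 3 : ℕ) : ZMod n)) := by
    intro i k
    induction k using Nat.strong_induction_on with
    | _ k ih =>
      rcases lt_or_ge k 3 with h | h
      · rw [Nat.mod_eq_of_lt h]
      · obtain ⟨m, rfl⟩ : ∃ m, k = m + 3 := ⟨k - 3, by omega⟩
        have e : i + ((m + 3 : ℕ) : ZMod n) = (i + ((m : ℕ) : ZMod n)) + 3 := by
          push_cast; ring
        rw [e, per3, Nat.add_mod_right]
        exact ih m (by omega)
  obtain ⟨d1, d2, d3⟩ := Dz j
  have hdvd : 3 ∣ n := by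
    have hk := key3 j n
    rw [ZMod.natCast_self, add_zero] at hk
    have h3n : n % 3 = 0 ∨ n % 3 = 1 ∨ n % 3 = 2 := by omega
    rcases h3n with h | h | h
    · omega
    · rw [h, Nat.cast_one] at hk; exact absurd hk d1
    · rw [h, Nat.cast_ofNat] at hk; exact absurd hk d3
  refine ⟨hdvd, ?_⟩
  obtain ⟨t, ht0⟩ := h3 0
  obtain ⟨e1, e2, e3⟩ := Dz t
  have castFin : ∀ k : ℕ, ((k : ℕ) : Fin 3) = ((k % 3 : ℕ) : Fin 3) := by
    intro k
    apply Fin.ext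
    simp only [Fin.val_natCast]
    omega
  refine ⟨t, ?_⟩
  have hne1 : W (t + 1) ≠ 0 := fun h => e1 (ht0.trans h.symm)
  have hne2 : W (t + 2) ≠ 0 := fun h => e3 (ht0.trans h.symm)
  rcases hx1 _ hne1 with hA | hA
  · left
    intro k
    have hB : W (t + 2) = 2 := hx2 _ hne2 (fun h => e2 (hA.trans h.symm))
    rw [key3 t k, castFin k]
    have hm : k % 3 = 0 ∨ k % 3 = 1 ∨ k % 3 = 2 := by omega
    rcases hm with h | h | h <;> rw [h]
    · simpa using ht0
    · simpa using hA
    · simpa using hB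
  · right
    intro k
    have hB : W (t + 2) = 1 := hx3 _ hne2 (fun h => e2 (hA.trans h.symm))
    rw [key3 t k, castFin (2 * k)]
    have hm : k % 3 = 0 ∨ k % 3 = 1 ∨ k % 3 = 2 := by omega
    rcases hm with h | h | h
    · rw [h, (by omega : (2 * k) % 3 = 0)]; simpa using ht0
    · rw [h, (by omega : (2 * k) % 3 = 2)]; simpa using hA
    · rw [h, (by omega : (2 * k) % 3 = 1)]; simpa using hB
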